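/- Let Z be a complete separable metric space with its Borel σ-algebra and let β, γ, ε > 0 with εβ/γ < 1, and α ∈ [0,1]. Suppose A is a map from probability measures on Z to ℝ^d that is (β/γ)-Lipschitz in coupling form: for all probability measures μ, ν on Z and every coupling π of μ and ν, ‖A(μ) − A(ν)‖ ≤ (β/γ) ∫ dist(z, z') dπ(z, z'). Let D : ℝ^d → P(Z) be ε-sensitive in coupling form and let D_h be a fixed probability measure on Z. Define the heterogeneous-population retraining map T(θ) := A(α D_h + (1−α) D(θ)). Then T is ρ-Lipschitz with ρ := (1−α) εβ/γ < 1; consequently T has a unique fixed point θ*_α, and the iterates θ_{t+1} := T(θ_t) satisfy ‖θ_t − θ*_α‖ ≤ ((1−α) εβ/γ)^t ‖θ_0 − θ*_α‖ for all t. -/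
import Mathlib


open MeasureTheory
open scoped NNReal ENNReal

/-- A coupling of two probability measures `μ` and `ν` on `Z` is a measure on `Z × Z`
whose first marginal is `μ` and whose second marginal is `ν`. -/
def IsCoupling {Z : Type*} [MeasurableSpace Z] (π : Measure (Z × Z)) (μ ν : Measure Z) : Prop :=
  π.map Prod.fst = μ ∧ π.map Prod.snd = ν

/-- **Proposition 5.3 (convergence of retraining with heterogeneous populations).** An
`α`-fraction of the population implements a fixed collective strategy inducing `Dh`, while a
`(1−α)`-fraction acts selfishly via the `ε`-sensitive distribution map `D`. Retraining
`T(θ) = A(α Dh + (1−α) D(θ))` is a `((1−α)εβ/γ)`-contraction and converges to its unique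
fixed point `θ*_α` at rate `((1−α)εβ/γ)^t`. -/
theorem heterogeneous_population_convergence
    {Z : Type*} [MetricSpace Z] [CompleteSpace Z] [TopologicalSpace.SeparableSpace Z]
    [MeasurableSpace Z] [BorelSpace Z] {d : ℕ}
    (β γ ε : ℝ) (hβ : 0 < β) (hγ : 0 < γ) (hε : 0 < ε) (hcontr : ε * β / γ < 1)
    (α : ℝ≥0) (hα : α ≤ 1)
    -- the learner's risk minimizer, assumed `(β/γ)`-Lipschitz in coupling form
    (A : Measure Z → EuclideanSpace ℝ (Fin d))
    (hA : ∀ μ ν : Measure Z, IsProbabilityMeasure μ → IsProbabilityMeasure ν →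
      ∀ π : Measure (Z × Z), IsCoupling π μ ν →
        ‖A μ - A ν‖ ≤ β / γ * ∫ p, dist p.1 p.2 ∂π)
    -- the distribution map of the selfish agents, assumed `ε`-sensitive in coupling form
    (D : EuclideanSpace ℝ (Fin d) → Measure Z)
    (hDprob : ∀ θ, IsProbabilityMeasure (D θ))
    (hDsens : ∀ θ θ', ∃ π : Measure (Z × Z), IsCoupling π (D θ) (D θ') ∧
      ∫ p, dist p.1 p.2 ∂π ≤ ε * ‖θ - θ'‖)
    -- the fixed distribution induced by the collective strategy
    (Dh : Measure Z) (hDh : IsProbabilityMeasure Dh)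
    -- the retraining map on the heterogeneous population
    (T : EuclideanSpace ℝ (Fin d) → EuclideanSpace ℝ (Fin d))
    (hT : ∀ θ, T θ = A (α • Dh + (1 - α) • D θ)) :
    ∃ ρ : ℝ, ρ = (1 - (α : ℝ)) * (ε * β / γ) ∧ ρ < 1 ∧
      (∀ θ θ', ‖T θ - T θ'‖ ≤ ρ * ‖θ - θ'‖) ∧
      ∃ θstar, T θstar = θstar ∧ (∀ θ', T θ' = θ' → θ' = θstar) ∧
        ∀ (θ₀ : EuclideanSpace ℝ (Fin d)) (t : ℕ),
          ‖T^[t] θ₀ - θstar‖ ≤ ρ ^ t * ‖θ₀ - θstar‖ := by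
  set ρ : ℝ := (1 - (α : ℝ)) * (ε * β / γ) with hρ
  have hα1 : (α : ℝ) ≤ 1 := by exact_mod_cast hα
  have hρ0 : 0 ≤ ρ := by
    apply mul_nonneg (by linarith)
    positivity
  have hεβγ : 0 ≤ ε * β / γ := by positivity
  have hρ1 : ρ < 1 :=
    lt_of_le_of_lt (by nlinarith [α.coe_nonneg]) hcontr
  -- the diagonal coupling of Dh with itself
  have hdiagm : Measurable (fun z : Z => (z, z)) := measurable_id.prodMk measurable_id
  set μd : Measure (Z × Z) := Dh.map (fun z => (z, z)) with hμd
  have hμdfst : μd.map Prod.fst = Dh := by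
    rw [hμd, Measure.map_map measurable_fst hdiagm,
      show (Prod.fst ∘ fun z : Z => (z, z)) = id from rfl, Measure.map_id]
  have hμdsnd : μd.map Prod.snd = Dh := by
    rw [hμd, Measure.map_map measurable_snd hdiagm,
      show (Prod.snd ∘ fun z : Z => (z, z)) = id from rfl, Measure.map_id]
  -- dist is a.e. zero w.r.t. μd
  have hdiag0 : (fun p : Z × Z => dist p.1 p.2) =ᵐ[μd] 0 := by
    rw [hμd]
    have : ∀ᵐ z ∂Dh, dist ((fun z : Z => (z, z)) z).1 ((fun z : Z => (z, z)) z).2 = 0 := by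
      filter_upwards with z; simp
    exact (MeasureTheory.ae_map_iff (hdiagm.aemeasurable)
      (by exact measurableSet_eq_fun (measurable_fst.dist measurable_snd) measurable_const)).2
      (by simpa using this)
  have hint_d : ∫ p, dist p.1 p.2 ∂μd = 0 := by
    rw [integral_congr_ae hdiag0]; simp
  -- probability of the mixture
  have hmixprob : ∀ θ, IsProbabilityMeasure (α • Dh + (1 - α) • D θ) := by
    intro θ
    constructor
    have h1 : Dh Set.univ = 1 := hDh.measure_univ
    have h2 : (D θ) Set.univ = 1 := (hDprob θ).measure_univ
    rw [Measure.add_apply, Measure.smul_apply, Measure.smul_apply, h1, h2,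
      ENNReal.smul_def, ENNReal.smul_def, smul_eq_mul, smul_eq_mul, mul_one, mul_one,
      ← ENNReal.coe_add, add_tsub_cancel_of_le hα, ENNReal.coe_one]
  -- the Lipschitz estimate
  have hLip : ∀ θ θ', ‖T θ - T θ'‖ ≤ ρ * ‖θ - θ'‖ := by
    intro θ θ'
    obtain ⟨π, ⟨hπ1, hπ2⟩, hπint⟩ := hDsens θ θ'
    set π' : Measure (Z × Z) := α • μd + (1 - α) • π with hπ'
    have hcoup : IsCoupling π' (α • Dh + (1 - α) • D θ) (α • Dh + (1 - α) • D θ') := by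
      constructor
      · rw [hπ', Measure.map_add _ _ measurable_fst, Measure.map_smul, Measure.map_smul,
          hμdfst, hπ1]
      · rw [hπ', Measure.map_add _ _ measurable_snd, Measure.map_smul, Measure.map_smul,
          hμdsnd, hπ2]
    have hbound : ∫ p, dist p.1 p.2 ∂π' ≤ ((1 - α : ℝ≥0) : ℝ) * (ε * ‖θ - θ'‖) := by
      have hnn : (0:ℝ) ≤ ((1 - α : ℝ≥0) : ℝ) * (ε * ‖θ - θ'‖) := by positivity
      by_cases hα1' : (1 - α : ℝ≥0) = 0
      · rw [hπ', hα1']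
        simp only [zero_smul, add_zero, integral_smul_nnreal_measure, hint_d, smul_zero]
        positivity
      by_cases hI : Integrable (fun p : Z × Z => dist p.1 p.2) π
      · have hId : Integrable (fun p : Z × Z => dist p.1 p.2) ((α : ℝ≥0) • μd) := by
          exact ((integrable_zero _ _ μd).congr hdiag0.symm).smul_measure_nnreal
        have hIπ : Integrable (fun p : Z × Z => dist p.1 p.2) ((1 - α : ℝ≥0) • π) :=
          hI.smul_measure_nnreal
        rw [hπ', integral_add_measure hId hIπ, integral_smul_nnreal_measure,
          integral_smul_nnreal_measure, hint_d, smul_zero, zero_add, NNReal.smul_def,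
          smul_eq_mul]
        have : (0:ℝ) ≤ ((1 - α : ℝ≥0) : ℝ) := (1 - α).coe_nonneg
        exact mul_le_mul_of_nonneg_left hπint this
      · have : ¬ Integrable (fun p : Z × Z => dist p.1 p.2) π' := by
          intro h
          apply hI
          have h2 := h.right_of_add_measure
          exact (integrable_smul_measure (c := ((1 - α : ℝ≥0) : ℝ≥0∞))
            (by exact_mod_cast hα1') ENNReal.coe_ne_top).1 h2
        rw [integral_undef this]
        exact hnn
    have key := hA _ _ (hmixprob θ) (hmixprob θ') π' hcoup
    rw [hT θ, hT θ']
    refine key.trans ?_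
    have hcoeq : ((1 - α : ℝ≥0) : ℝ) = 1 - (α : ℝ) := by
      rw [NNReal.coe_sub hα, NNReal.coe_one]
    calc β / γ * ∫ p, dist p.1 p.2 ∂π'
        ≤ β / γ * (((1 - α : ℝ≥0) : ℝ) * (ε * ‖θ - θ'‖)) := by
          exact mul_le_mul_of_nonneg_left hbound (by positivity)
      _ = ρ * ‖θ - θ'‖ := by rw [hcoeq, hρ]; ring
  -- Banach fixed point
  have hLW : LipschitzWith ρ.toNNReal T := by
    apply LipschitzWith.of_dist_le_mul
    intro x y
    rw [dist_eq_norm, dist_eq_norm]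
    simpa [Real.coe_toNNReal _ hρ0] using hLip x y
  have hK1 : ρ.toNNReal < 1 := by
    have h : (ρ.toNNReal : ℝ) < 1 := by rw [Real.coe_toNNReal _ hρ0]; exact hρ1
    exact_mod_cast h
  have hC : ContractingWith ρ.toNNReal T := ⟨hK1, hLW⟩
  refine ⟨ρ, rfl, hρ1, hLip, hC.fixedPoint T, hC.fixedPoint_isFixedPt, ?_, ?_⟩
  · intro θ' hθ'
    exact hC.fixedPoint_unique hθ'
  · intro θ₀ t
    have hfix : T^[t] (hC.fixedPoint T) = hC.fixedPoint T :=
      (hC.fixedPoint_isFixedPt).iterate t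
    have := (hLW.iterate t).dist_le_mul θ₀ (hC.fixedPoint T)
    rw [hfix, dist_eq_norm, dist_eq_norm] at this
    refine this.trans_eq ?_
    congr 1
    push_cast
    rw [Real.coe_toNNReal _ hρ0]
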